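/- Let σ(t)=1/(1+e^{-t}) and γ(a)=log(a/(1-a)). For any a, a₀ ∈ (0,1) and b, b₀ ∈ ℝ, |σ(γ(a)+b) − σ(γ(a₀)+b₀)| ≤ |a−a₀|·e^{max(|b|,|b₀|)} + |b−b₀|. -/

import Mathlib

noncomputable def sigmoid (t : ℝ) : ℝ := 1 / (1 + Real.exp (-t))

noncomputable def logit (a : ℝ) : ℝ := Real.log (a / (1 - a))

open Real hiding sigmoid

lemma sigmoid_sub_le (x y : ℝ) (h : y ≤ x) : |sigmoid x - sigmoid y| ≤ x - y := by
  have hx := Real.exp_pos (-x)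
  have hy := Real.exp_pos (-y)
  have h1 : sigmoid x - sigmoid y
      = (exp (-y) - exp (-x)) / ((1 + exp (-x)) * (1 + exp (-y))) := by
    unfold sigmoid
    field_simp
    ring
  have hle := Real.add_one_le_exp (y - x)
  have h2 : exp (-y) - exp (-x) ≤ (x - y) * exp (-y) := by
    have hmul : exp (-y) * exp (y - x) = exp (-x) := by
      rw [← Real.exp_add]; ring_nf
    nlinarith
  have hnn : 0 ≤ exp (-y) - exp (-x) := by
    have := Real.exp_le_exp.mpr (neg_le_neg h); linarith
  have hpos : 0 < (1 + exp (-x)) * (1 + exp (-y)) := by positivity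
  rw [h1, abs_of_nonneg (by positivity), div_le_iff₀ hpos]
  nlinarith

lemma abs_sigmoid_sub (x y : ℝ) : |sigmoid x - sigmoid y| ≤ |x - y| := by
  rcases le_total y x with h | h
  · exact (sigmoid_sub_le x y h).trans (le_abs_self _)
  · rw [abs_sub_comm, abs_sub_comm x y]
    exact (sigmoid_sub_le y x h).trans (le_abs_self _)

lemma sigmoid_logit_eq (a b : ℝ) (h1 : 0 < a) (h2 : a < 1) :
    sigmoid (logit a + b) = a * exp b / (1 - a + a * exp b) := by
  have h3 : (0:ℝ) < 1 - a := by linarith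
  have hq : (0:ℝ) < a / (1 - a) := by positivity
  have hub := Real.exp_pos b
  unfold sigmoid logit
  rw [neg_add, Real.exp_add, Real.exp_neg, Real.exp_log hq]
  rw [Real.exp_neg]
  field_simp
  ring

theorem sigmoid_logit_lipschitz_bound (a a₀ b b₀ : ℝ)
    (ha : a ∈ Set.Ioo (0:ℝ) 1) (ha₀ : a₀ ∈ Set.Ioo (0:ℝ) 1) :
    |sigmoid (logit a + b) - sigmoid (logit a₀ + b₀)|
      ≤ |a - a₀| * Real.exp (max |b| |b₀|) + |b - b₀| := by
  obtain ⟨ha1, ha2⟩ := ha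
  obtain ⟨ha01, ha02⟩ := ha₀
  set u := exp b with hu_def
  have hu : (0:ℝ) < u := exp_pos b
  have hD : (0:ℝ) < 1 - a + a * u := by nlinarith
  have hD₀ : (0:ℝ) < 1 - a₀ + a₀ * u := by nlinarith
  have key2 : |sigmoid (logit a₀ + b) - sigmoid (logit a₀ + b₀)| ≤ |b - b₀| := by
    have := abs_sigmoid_sub (logit a₀ + b) (logit a₀ + b₀)
    simpa using this
  have key1 : |sigmoid (logit a + b) - sigmoid (logit a₀ + b)|
      ≤ |a - a₀| * Real.exp (max |b| |b₀|) := by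
    rw [sigmoid_logit_eq a b ha1 ha2, sigmoid_logit_eq a₀ b ha01 ha02]
    have heq : a * u / (1 - a + a * u) - a₀ * u / (1 - a₀ + a₀ * u)
        = u * (a - a₀) / ((1 - a + a * u) * (1 - a₀ + a₀ * u)) := by
      field_simp
      ring
    rw [heq, abs_div, abs_mul, abs_of_pos hu,
      abs_of_pos (by positivity : (0:ℝ) < (1 - a + a * u) * (1 - a₀ + a₀ * u)),
      div_le_iff₀ (by positivity)]
    have hbound : u ≤ exp |b| * ((1 - a + a * u) * (1 - a₀ + a₀ * u)) := by
      rcases le_total 0 b with hb | hb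
      · rw [abs_of_nonneg hb, ← hu_def]
        have h1 : (1:ℝ) ≤ u := by
          rw [hu_def]; exact Real.one_le_exp hb
        have hD1 : 1 ≤ 1 - a + a * u := by nlinarith
        have hD01 : 1 ≤ 1 - a₀ + a₀ * u := by nlinarith
        nlinarith [mul_le_mul hD1 hD01 zero_le_one (by linarith : (0:ℝ) ≤ 1 - a + a * u)]
      · rw [abs_of_nonpos hb]
        have h1 : u ≤ 1 := by
          rw [hu_def]; exact Real.exp_le_one_iff.mpr hb
        have h2 : exp (-b) * u = 1 := by
          rw [hu_def, ← Real.exp_add]; simp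
        have hD' : u ≤ 1 - a + a * u := by nlinarith
        have hD₀' : u ≤ 1 - a₀ + a₀ * u := by nlinarith
        have hexp : exp (-b) = 1 / u := by
          field_simp at h2 ⊢; linarith
        rw [hexp]
        rw [div_mul_eq_mul_div, le_div_iff₀ hu]
        nlinarith
    have hmax : exp |b| ≤ exp (max |b| |b₀|) := Real.exp_le_exp.mpr (le_max_left _ _)
    calc u * |a - a₀| ≤ exp |b| * ((1 - a + a * u) * (1 - a₀ + a₀ * u)) * |a - a₀| := by
            have := abs_nonneg (a - a₀); nlinarith
      _ ≤ exp (max |b| |b₀|) * ((1 - a + a * u) * (1 - a₀ + a₀ * u)) * |a - a₀| := by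
            gcongr
      _ = |a - a₀| * exp (max |b| |b₀|) * ((1 - a + a * u) * (1 - a₀ + a₀ * u)) := by ring
  calc |sigmoid (logit a + b) - sigmoid (logit a₀ + b₀)|
      ≤ |sigmoid (logit a + b) - sigmoid (logit a₀ + b)|
        + |sigmoid (logit a₀ + b) - sigmoid (logit a₀ + b₀)| := abs_sub_le _ _ _
    _ ≤ |a - a₀| * Real.exp (max |b| |b₀|) + |b - b₀| := add_le_add key1 key2
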